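/- Every edge xy of the Triplex satisfies W_1(μ_x^{1/4}, μ_y^{1/4}) = 1, i.e. κ_{1/4}(x,y) = 0; hence the Triplex is Ricci-flat. -/

import Mathlib

open scoped ENNReal

namespace RicciFlatCubic

variable {V : Type*}

/-- The probability measure `μ_x^p` on the vertex set: mass `p` at `x`,
mass `(1-p)/deg x` at each neighbor of `x`, and `0` elsewhere. -/
noncomputable def muMeasure (G : SimpleGraph V) [G.LocallyFinite] (p : ℝ≥0∞) (x : V) :
    V → ℝ≥0∞ := fun z =>
  haveI : DecidableEq V := Classical.decEq V
  haveI : Decidable (G.Adj x z) := Classical.dec _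
  if z = x then p
  else if G.Adj x z then (1 - p) / (G.degree x : ℝ≥0∞)
  else 0

/-- `π : V × V → [0,1]` is a transport plan from `μ₁` to `μ₂` if its marginals are `μ₁`, `μ₂`. -/
def IsTransportPlan (μ₁ μ₂ : V → ℝ≥0∞) (π : V → V → ℝ≥0∞) : Prop :=
  (∀ u v, π u v ≤ 1) ∧ (∀ u, ∑' v, π u v = μ₁ u) ∧ (∀ v, ∑' u, π u v = μ₂ v)

/-- The Wasserstein distance `W₁(μ₁, μ₂)`: the infimum over all transport plans of the
transport cost `∑ d(u,v) π(u,v)`, where `d` is the shortest-path distance in `G`. -/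
noncomputable def W1 (G : SimpleGraph V) (μ₁ μ₂ : V → ℝ≥0∞) : ℝ≥0∞ :=
  ⨅ π : {π : V → V → ℝ≥0∞ // IsTransportPlan μ₁ μ₂ π},
    ∑' q : V × V, (G.dist q.1 q.2 : ℝ≥0∞) * π.1 q.1 q.2

/-- The `p`-Ollivier-Ricci curvature `κ_p(x,y) = 1 - W₁(μ_x^p, μ_y^p)` (as a real number),
for a real idleness parameter `p`. -/
noncomputable def kappa (G : SimpleGraph V) [G.LocallyFinite] (p : ℝ) (x y : V) : ℝ :=
  1 - (W1 G (muMeasure G (ENNReal.ofReal p) x) (muMeasure G (ENNReal.ofReal p) y)).toReal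

/-- The edge `xy` lies on two 5-cycles whose vertex sets intersect exactly in `{x, y}`. -/
def TwoPentagons (G : SimpleGraph V) (x y : V) : Prop :=
  ∃ P₁ P₂ : G.Walk x x, P₁.IsCycle ∧ P₂.IsCycle ∧ P₁.length = 5 ∧ P₂.length = 5 ∧
    s(x, y) ∈ P₁.edges ∧ s(x, y) ∈ P₂.edges ∧
    {v | v ∈ P₁.support} ∩ {v | v ∈ P₂.support} = {x, y}

/-- The Petersen graph as the Kneser graph `K(5,2)`. -/
def petersen : SimpleGraph {s : Finset (Fin 5) // s.card = 2} where
  Adj a b := Disjoint a.1 b.1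
  symm := ⟨fun _ _ h => h.symm⟩
  loopless := by
    constructor
    rintro ⟨s, hs⟩ h
    rw [disjoint_self] at h
    simp only [Finset.bot_eq_empty] at h
    simp [h] at hs

/-- The Triplex: a 12-cycle on `ℤ/12ℤ` together with six chords. -/
def triplex : SimpleGraph (ZMod 12) :=
  SimpleGraph.fromRel fun i j =>
    j = i + 1 ∨ (i = 1 ∧ j = 7) ∨ (i = 2 ∧ j = 10) ∨ (i = 3 ∧ j = 8) ∨
      (i = 4 ∧ j = 12) ∨ (i = 5 ∧ j = 9) ∨ (i = 6 ∧ j = 11)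

/-- The dodecahedral graph: layer `0` is the outer 5-cycle `a`, layers `1`, `2` form the
middle 10-cycle `b₁ c₁ b₂ c₂ … b₅ c₅`, layer `3` is the inner 5-cycle `d`. -/
def dodecahedral : SimpleGraph (Fin 4 × ZMod 5) :=
  SimpleGraph.fromRel fun p q =>
    (p.1 = 0 ∧ q.1 = 0 ∧ q.2 = p.2 + 1) ∨
    (p.1 = 0 ∧ q.1 = 1 ∧ q.2 = p.2) ∨
    (p.1 = 1 ∧ q.1 = 2 ∧ q.2 = p.2) ∨
    (p.1 = 2 ∧ q.1 = 1 ∧ q.2 = p.2 + 1) ∨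
    (p.1 = 2 ∧ q.1 = 3 ∧ q.2 = p.2) ∨
    (p.1 = 3 ∧ q.1 = 3 ∧ q.2 = p.2 + 1)

/-- The half-dodecahedral graph: inner 5-cycle `y` (`Sum.inl`), outer 10-cycle `x`
(`Sum.inr`), and spokes `yᵢ ~ x_{2i-1}`. -/
def halfDodecahedral : SimpleGraph (ZMod 5 ⊕ ZMod 10) :=
  SimpleGraph.fromRel fun p q =>
    (∃ i : ZMod 5, p = Sum.inl i ∧ q = Sum.inl (i + 1)) ∨
    (∃ j : ZMod 10, p = Sum.inr j ∧ q = Sum.inr (j + 1)) ∨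
    (∃ i : ZMod 5, p = Sum.inl i ∧ q = Sum.inr (2 * (i.val : ZMod 10) - 1))

/-- The two-sided infinite path on `ℤ`. -/
def infinitePath : SimpleGraph ℤ := SimpleGraph.fromRel fun i j => j = i + 1

/-- The cycle `Cₙ` on `ℤ/nℤ`. -/
def cycleZMod (n : ℕ) : SimpleGraph (ZMod n) := SimpleGraph.fromRel fun i j => j = i + 1

noncomputable instance (v : {s : Finset (Fin 5) // s.card = 2}) :
    Fintype (petersen.neighborSet v) := (Set.toFinite _).fintype

noncomputable instance (v : ZMod 12) : Fintype (triplex.neighborSet v) :=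
  (Set.toFinite _).fintype

noncomputable instance (v : Fin 4 × ZMod 5) : Fintype (dodecahedral.neighborSet v) :=
  (Set.toFinite _).fintype


section TriplexProof

set_option maxRecDepth 40000

open Finset

instance : DecidableRel triplex.Adj := fun a b =>
  decidable_of_iff _ (SimpleGraph.fromRel_adj _ a b).symm

/-- The ordered edge list of the triplex, in `ℕ` coordinates. -/
def adjList : List (ℕ × ℕ) :=
  [(0,1),(1,2),(2,3),(3,4),(4,5),(5,6),(6,7),(7,8),(8,9),(9,10),(10,11),(11,0),
   (1,7),(2,10),(3,8),(4,0),(5,9),(6,11)]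

/-- Fast decidable adjacency predicate for the triplex. -/
def adjP (a b : ZMod 12) : Prop := (a.val, b.val) ∈ adjList ∨ (b.val, a.val) ∈ adjList

instance : ∀ a b, Decidable (adjP a b) := fun a b => by unfold adjP; infer_instance

lemma adj_iff : ∀ a b : ZMod 12, triplex.Adj a b ↔ adjP a b := by decide

def dData : List (List Nat) := [[0, 1, 2, 2, 1, 2, 2, 2, 3, 3, 2, 1], [1, 0, 1, 2, 2, 3, 2, 1, 2, 3, 2, 2], [2, 1, 0, 1, 2, 3, 3, 2, 2, 2, 1, 2], [2, 2, 1, 0, 1, 2, 3, 2, 1, 2, 2, 3], [1, 2, 2, 1, 0, 1, 2, 3, 2, 2, 3, 2], [2, 3, 3, 2, 1, 0, 1, 2, 2, 1, 2, 2], [2, 2, 3, 3, 2, 1, 0, 1, 2, 2, 2, 1], [2, 1, 2, 2, 3, 2, 1, 0, 1, 2, 3, 2], [3, 2, 2, 1, 2, 2, 2, 1, 0, 1, 2, 3], [3, 3, 2, 2, 2, 1, 2, 2, 1, 0, 1, 2], [2, 2, 1, 2, 3, 2, 2, 3, 2, 1, 0, 1], [1, 2, 2, 3, 2, 2, 1,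 2, 3, 2, 1, 0]]

def potData : List (List (List Nat)) := [[[], [1, 0, 0, 1, 2, 1, 1, 0, 0, 0, 1, 2], [], [], [1, 2, 1, 0, 0, 0, 1, 1, 0, 0, 1, 2], [], [], [], [], [], [], [1, 2, 1, 1, 2, 1, 0, 1, 0, 0, 0, 0]], [[0, 1, 2, 1, 0, 0, 1, 2, 1, 0, 1, 0], [], [2, 1, 0, 0, 1, 0, 1, 2, 1, 0, 0, 1], [], [], [], [], [2, 1, 2, 1, 1, 0, 0, 0, 0, 0, 1, 1], [], [], [], []], [[], [0, 0, 1, 2, 1, 0, 0, 0, 1, 1, 2, 1], [], [1, 2, 1, 0, 0, 0, 0, 1, 0, 1, 2, 1], [], [], [], [], [], [], [1, 2, 1, 2, 1, 0, 0, 1, 1, 0, 0, 0], []], [[], [], [1, 0, 0, 1, 2, 1, 0, 1, 2, 1, 0, 0], [], [0, 1, 2, 1, 0, 0, 0, 1, 2, 1, 1, 0], [], [], [], [1, 1, 2, 1, 2, 1, 0, 0, 0, 0, 1, 0], [], [], []], [[0, 0, 1, 2, 1, 2, 1, 0, 1, 1, 0, 0], [], [], [2, 1, 0, 0, 1, 2,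 1, 0, 0, 1, 0, 1], [], [2, 1, 1, 2, 1, 0, 0, 0, 1, 0, 0, 1], [], [], [], [], [], []], [[], [], [], [], [0, 0, 0, 0, 0, 1, 2, 1, 1, 2, 1, 1], [], [1, 0, 0, 1, 2, 1, 0, 0, 1, 2, 1, 0], [], [], [1, 0, 0, 1, 2, 1, 2, 1, 0, 0, 0, 1], [], []], [[], [], [], [], [], [1, 1, 0, 0, 0, 0, 1, 2, 1, 0, 1, 2], [], [1, 0, 0, 0, 1, 2, 1, 0, 0, 1, 1, 2], [], [], [], [0, 1, 0, 0, 1, 2, 1, 2, 1, 1, 0, 0]], [[], [0, 0, 0, 1, 0, 1, 2, 1, 2, 1, 0, 1], [], [], [], [], [1, 2, 1, 1, 0, 0, 0, 1, 2, 1, 0, 0], [], [1, 2, 1, 0, 0, 1, 2, 1, 0, 0, 0, 1], [], [], []], [[], [], [], [0, 1, 0, 0, 0, 1, 1, 2, 1, 2, 1, 0], [], [], [], [0, 0, 1, 2, 1, 1, 0, 0, 1, 2, 1, 0], [], [0, 1, 1, 2, 1, 0, 1, 2, 1, 0, 0, 0], [], []], [[], [], [], [], [], [0, 0, 1, 1,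 0, 0, 0, 1, 2, 1, 2, 1], [], [], [0, 0, 1, 0, 1, 2, 1, 0, 0, 1, 2, 1], [], [0, 0, 0, 1, 1, 2, 1, 1, 2, 1, 0, 0], []], [[], [], [1, 0, 0, 0, 0, 1, 1, 0, 1, 2, 1, 2], [], [], [], [], [], [], [1, 1, 2, 1, 0, 0, 1, 0, 0, 0, 1, 2], [], [0, 1, 2, 1, 0, 1, 0, 0, 1, 2, 1, 0]], [[0, 0, 1, 0, 0, 1, 2, 1, 0, 1, 2, 1], [], [], [], [], [], [2, 1, 1, 0, 1, 0, 0, 0, 0, 1, 2, 1], [], [], [], [2, 1, 0, 0, 1, 1, 2, 1, 0, 0, 0, 1], []]]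

def planData : List (List (List (Nat × Nat))) := [[[], [(0, 0), (1, 1), (4, 2), (11, 7)], [], [], [(0, 0), (1, 3), (4, 4), (11, 5)], [], [], [], [], [], [], [(0, 0), (1, 10), (4, 6), (11, 11)]], [[(0, 0), (1, 1), (2, 4), (7, 11)], [], [(0, 10), (1, 1), (2, 2), (7, 3)], [], [], [], [], [(0, 6), (1, 1), (2, 8), (7, 7)], [], [], [], []], [[], [(1, 1), (2, 2), (3, 7), (10, 0)], [], [(1, 4), (2, 2), (3, 3), (10, 8)], [], [], [], [], [], [], [(1, 11), (2, 2), (3, 9), (10, 10)], []], [[], [], [(2, 2), (3, 3), (4, 1), (8, 10)], [], [(2, 0), (3, 3), (4, 4), (8, 5)], [], [], [], [(2, 7), (3, 3), (4, 9), (8, 8)], [], [], []], [[(0, 0), (3, 1), (4, 4), (5, 11)], [], [], [(0, 2), (3, 3), (4, 4), (5, 8)], [], [(0, 6), (3, 9), (4, 4), (5, 5)], [], [], [], [], [], []], [[], [], [], [], [(4, 4), (5, 5), (6, 0), (9, 3)], [], [(4, 11), (5, 5), (6, 6), (9, 7)], [], [], [(4, 8), (5, 5), (6, 10), (9, 9)],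 [], []], [[], [], [], [], [], [(5, 5), (6, 6), (7, 9), (11, 4)], [], [(5, 8), (6, 6), (7, 7), (11, 1)], [], [], [], [(5, 10), (6, 6), (7, 0), (11, 11)]], [[], [(1, 1), (6, 0), (7, 7), (8, 2)], [], [], [], [], [(1, 11), (6, 6), (7, 7), (8, 5)], [], [(1, 3), (6, 9), (7, 7), (8, 8)], [], [], []], [[], [], [], [(3, 3), (7, 2), (8, 8), (9, 4)], [], [], [], [(3, 1), (7, 7), (8, 8), (9, 6)], [], [(3, 10), (7, 5), (8, 8), (9, 9)], [], []], [[], [], [], [], [], [(5, 5), (8, 4), (9, 9), (10, 6)], [], [], [(5, 7), (8, 8), (9, 9), (10, 3)], [], [(5, 11), (8, 2), (9, 9), (10, 10)], []], [[], [], [(2, 2), (9, 3), (10, 10), (11, 1)], [], [], [], [], [], [], [(2, 8), (9, 9), (10, 10), (11, 5)], [], [(2, 0), (9, 6), (10, 10), (11, 11)]], [[(0, 0), (6, 4), (10, 1), (11, 11)], [], [], [], [], [], [(0, 7), (6, 6), (10, 5), (11, 11)], [], [], [], [(0, 2), (6, 9), (10, 10), (11, 11)], []]]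


/-- Matrix of shortest-path distances in the triplex. -/
def dMat (u v : ZMod 12) : ℕ := (dData.getD u.val []).getD v.val 0

/-- For each (ordered) edge `xy`, a 1-Lipschitz potential certifying `W₁ ≥ 1`. -/
def pot (x y z : ZMod 12) : ℕ := ((potData.getD x.val []).getD y.val []).getD z.val 0

/-- For each (ordered) edge `xy`, a 0/1 matching matrix certifying `W₁ ≤ 1`. -/
def planN (x y u v : ZMod 12) : ℕ :=
  if (u.val, v.val) ∈ (planData.getD x.val []).getD y.val [] then 1 else 0

/-- Indicator of the closed neighborhood of `t`. -/
def chi (t z : ZMod 12) : ℕ := if z = t ∨ adjP t z then 1 else 0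

lemma dStep : ∀ u v : ZMod 12, u ≠ v → ∃ w, adjP u w ∧ dMat w v < dMat u v := by decide

lemma degFilter : ∀ t : ZMod 12, (Finset.univ.filter (triplex.Adj t)).card = 3 := by decide

lemma potLip : ∀ x y : ZMod 12, adjP x y → ∀ a b, adjP a b → pot x y a ≤ pot x y b + 1 := by
  decide

lemma potSum : ∀ x y : ZMod 12, adjP x y →
    ∑ u, chi x u * pot x y u = ∑ u, chi y u * pot x y u + 4 := by decide

lemma planRow : ∀ x y : ZMod 12, adjP x y → ∀ u, ∑ v, planN x y u v = chi x u := by decide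

lemma planCol : ∀ x y : ZMod 12, adjP x y → ∀ v, ∑ u, planN x y u v = chi y v := by decide

lemma planLe : ∀ x y u v : ZMod 12, planN x y u v ≤ 1 := by decide

lemma planCost : ∀ x y : ZMod 12, adjP x y →
    ∑ u : ZMod 12, ∑ v : ZMod 12, dMat u v * planN x y u v ≤ 4 := by decide

/-- Every pair is reachable, with distance at most `dMat`. -/
lemma reach_and_dist (u v : ZMod 12) :
    triplex.Reachable u v ∧ triplex.dist u v ≤ dMat u v := by
  have key : ∀ n (u v : ZMod 12), dMat u v ≤ n →
      triplex.Reachable u v ∧ triplex.dist u v ≤ dMat u v := by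
    intro n
    induction n with
    | zero =>
      intro u v h
      by_cases huv : u = v
      · subst huv; exact ⟨SimpleGraph.Reachable.refl u, by simp [SimpleGraph.dist_self]⟩
      · obtain ⟨w, _, hlt⟩ := dStep u v huv; omega
    | succ n ih =>
      intro u v h
      by_cases huv : u = v
      · subst huv; exact ⟨SimpleGraph.Reachable.refl u, by simp [SimpleGraph.dist_self]⟩
      · obtain ⟨w, hadj, hlt⟩ := dStep u v huv
        have hadj' : triplex.Adj u w := (adj_iff u w).mpr hadj
        obtain ⟨hr, hd⟩ := ih w v (by omega)
        refine ⟨hadj'.reachable.trans hr, ?_⟩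
        obtain ⟨p, hp⟩ := hr.exists_walk_length_eq_dist
        have hle := SimpleGraph.dist_le (SimpleGraph.Walk.cons hadj' p)
        rw [SimpleGraph.Walk.length_cons, hp] at hle
        omega
  exact key (dMat u v) u v le_rfl

lemma walk_bound (f : ZMod 12 → ℕ) (hf : ∀ a b, triplex.Adj a b → f a ≤ f b + 1) :
    ∀ {u v : ZMod 12} (p : triplex.Walk u v), f u ≤ f v + p.length := by
  intro u v p
  induction p with
  | nil => simp
  | @cons a b c h q ih =>
    have := hf a b h
    rw [SimpleGraph.Walk.length_cons]
    omega

lemma lip_dist (f : ZMod 12 → ℕ) (hf : ∀ a b, triplex.Adj a b → f a ≤ f b + 1)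
    (u v : ZMod 12) : f u ≤ f v + triplex.dist u v := by
  obtain ⟨hr, -⟩ := reach_and_dist u v
  obtain ⟨p, hp⟩ := hr.exists_walk_length_eq_dist
  have := walk_bound f hf p
  omega

lemma div_arith1 : ((1 : ℝ≥0∞) - 1/4) / 3 = 1/4 := by
  have h1 : (1 : ℝ≥0∞) - 1/4 = 3/4 := by
    rw [ENNReal.sub_eq_of_eq_add (by norm_num)]
    rw [ENNReal.div_add_div_same]
    norm_num
    rw [ENNReal.div_self] <;> norm_num
  rw [h1, ENNReal.div_eq_div_iff] <;> try norm_num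
  rw [mul_comm, ENNReal.div_mul_cancel] <;> norm_num

lemma deg_eq (t : ZMod 12) : triplex.degree t = 3 := by
  have h : triplex.neighborFinset t = Finset.univ.filter (triplex.Adj t) := by
    ext w
    simp [SimpleGraph.mem_neighborFinset]
  rw [SimpleGraph.degree, h, degFilter]

/-- Closed form of the measure `μ_t^{1/4}` on the triplex. -/
lemma mu_eq (t z : ZMod 12) :
    muMeasure triplex (1/4) t z = (chi t z : ℝ≥0∞) * (1/4) := by
  have hq : ((1 : ℝ≥0∞) - 1/4) / ((triplex.degree t : ℕ) : ℝ≥0∞) = 1/4 := by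
    rw [deg_eq]; exact_mod_cast div_arith1
  simp only [muMeasure, chi]
  by_cases hA : z = t
  · rw [if_pos hA, if_pos (Or.inl hA)]
    simp
  · rw [if_neg hA]
    by_cases hB : triplex.Adj t z
    · rw [if_pos hB, if_pos (Or.inr ((adj_iff t z).mp hB))]
      simpa using hq
    · rw [if_neg hB, if_neg ?_]
      · simp
      · rintro (h | h)
        · exact hA h
        · exact hB ((adj_iff t z).mpr h)

/-- Lower bound: a 1-Lipschitz potential gives `1 ≤ W₁`. -/
lemma W1_ge (μ₁ μ₂ : ZMod 12 → ℝ≥0∞) (f : ZMod 12 → ℕ)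
    (hf : ∀ a b, triplex.Adj a b → f a ≤ f b + 1)
    (B : ℝ≥0∞) (hB : B ≠ ⊤)
    (hA : ∑ u, (f u : ℝ≥0∞) * μ₁ u = B + 1)
    (hBeq : ∑ v, (f v : ℝ≥0∞) * μ₂ v = B) :
    1 ≤ W1 triplex μ₁ μ₂ := by
  refine le_iInf ?_
  rintro ⟨π, hle, h1, h2⟩
  rw [tsum_fintype]
  have key : ∀ q : ZMod 12 × ZMod 12, (f q.1 : ℝ≥0∞) * π q.1 q.2 ≤
      (triplex.dist q.1 q.2 : ℝ≥0∞) * π q.1 q.2 + (f q.2 : ℝ≥0∞) * π q.1 q.2 := by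
    intro q
    have hl : (f q.1 : ℝ≥0∞) ≤ (triplex.dist q.1 q.2 : ℝ≥0∞) + (f q.2 : ℝ≥0∞) := by
      have := lip_dist f hf q.1 q.2
      exact_mod_cast Nat.le_trans this (by omega)
    calc (f q.1 : ℝ≥0∞) * π q.1 q.2
        ≤ ((triplex.dist q.1 q.2 : ℝ≥0∞) + (f q.2 : ℝ≥0∞)) * π q.1 q.2 :=
          mul_le_mul_left hl _
      _ = _ := by rw [add_mul]
  have hsumA : ∑ q : ZMod 12 × ZMod 12, (f q.1 : ℝ≥0∞) * π q.1 q.2 = B + 1 := by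
    rw [Fintype.sum_prod_type, ← hA]
    refine Finset.sum_congr rfl fun u _ => ?_
    show ∑ v, (f u : ℝ≥0∞) * π u v = (f u : ℝ≥0∞) * μ₁ u
    rw [← Finset.mul_sum, ← h1 u, tsum_fintype]
  have hsumB : ∑ q : ZMod 12 × ZMod 12, (f q.2 : ℝ≥0∞) * π q.1 q.2 = B := by
    rw [Fintype.sum_prod_type, Finset.sum_comm, ← hBeq]
    refine Finset.sum_congr rfl fun v _ => ?_
    show ∑ u, (f v : ℝ≥0∞) * π u v = (f v : ℝ≥0∞) * μ₂ v
    rw [← Finset.mul_sum, ← h2 v, tsum_fintype]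
  have hchain : B + 1 ≤ (∑ q : ZMod 12 × ZMod 12,
      (triplex.dist q.1 q.2 : ℝ≥0∞) * π q.1 q.2) + B := by
    rw [← hsumA, ← hsumB, ← Finset.sum_add_distrib]
    exact Finset.sum_le_sum fun q _ => key q
  rw [add_comm B 1] at hchain
  exact (ENNReal.add_le_add_iff_right hB).mp hchain

end TriplexProof

theorem triplex_ricciFlat (x y : ZMod 12) (hxy : triplex.Adj x y) :
    W1 triplex (muMeasure triplex (1/4) x) (muMeasure triplex (1/4) y) = 1 := by
  have hxy' : adjP x y := (adj_iff x y).mp hxy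
  have hf : ∀ a b, triplex.Adj a b → pot x y a ≤ pot x y b + 1 :=
    fun a b h => potLip x y hxy' a b ((adj_iff a b).mp h)
  set π : ZMod 12 → ZMod 12 → ℝ≥0∞ :=
    fun u v => (planN x y u v : ℝ≥0∞) * (1/4) with hπ
  have hq14 : (1/4 : ℝ≥0∞) ≤ 1 := by
    rw [one_div]; exact ENNReal.inv_le_one.mpr (by norm_num)
  have h41 : (4 : ℝ≥0∞) * (1/4) = 1 := by
    rw [one_div, ENNReal.mul_inv_cancel] <;> norm_num
  have htp : IsTransportPlan (muMeasure triplex (1/4) x) (muMeasure triplex (1/4) y) π := by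
    refine ⟨fun u v => ?_, fun u => ?_, fun v => ?_⟩
    · calc (planN x y u v : ℝ≥0∞) * (1/4) ≤ 1 * (1/4) := by
            gcongr; exact_mod_cast planLe x y u v
        _ ≤ 1 := by rw [one_mul]; exact hq14
    · rw [tsum_fintype]
      calc ∑ v, (planN x y u v : ℝ≥0∞) * (1/4)
          = ((∑ v, planN x y u v : ℕ) : ℝ≥0∞) * (1/4) := by
            rw [← Finset.sum_mul, Nat.cast_sum]
        _ = (chi x u : ℝ≥0∞) * (1/4) := by rw [planRow x y hxy' u]
        _ = muMeasure triplex (1/4) x u := (mu_eq x u).symm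
    · rw [tsum_fintype]
      calc ∑ u, (planN x y u v : ℝ≥0∞) * (1/4)
          = ((∑ u, planN x y u v : ℕ) : ℝ≥0∞) * (1/4) := by
            rw [← Finset.sum_mul, Nat.cast_sum]
        _ = (chi y v : ℝ≥0∞) * (1/4) := by rw [planCol x y hxy' v]
        _ = muMeasure triplex (1/4) y v := (mu_eq y v).symm
  refine le_antisymm ?_ ?_
  · -- upper bound via the explicit plan
    refine iInf_le_of_le ⟨π, htp⟩ ?_
    rw [tsum_fintype]
    calc ∑ q : ZMod 12 × ZMod 12, (triplex.dist q.1 q.2 : ℝ≥0∞) * π q.1 q.2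
        ≤ ∑ q : ZMod 12 × ZMod 12, (dMat q.1 q.2 : ℝ≥0∞) * π q.1 q.2 := by
          refine Finset.sum_le_sum fun q _ => mul_le_mul_left ?_ _
          exact_mod_cast (reach_and_dist q.1 q.2).2
      _ = ((∑ u : ZMod 12, ∑ v : ZMod 12, dMat u v * planN x y u v : ℕ) : ℝ≥0∞) * (1/4) := by
          rw [Fintype.sum_prod_type, Nat.cast_sum, Finset.sum_mul]
          refine Finset.sum_congr rfl fun u _ => ?_
          rw [Nat.cast_sum, Finset.sum_mul]
          refine Finset.sum_congr rfl fun v _ => ?_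
          show (dMat u v : ℝ≥0∞) * ((planN x y u v : ℝ≥0∞) * (1/4))
              = ((dMat u v * planN x y u v : ℕ) : ℝ≥0∞) * (1/4)
          push_cast
          ring
      _ ≤ ((4 : ℕ) : ℝ≥0∞) * (1/4) := by
          gcongr
          exact_mod_cast planCost x y hxy'
      _ = 1 := by rw [Nat.cast_ofNat, h41]
  · -- lower bound via the potential
    refine W1_ge _ _ (pot x y) hf
      (((∑ u, chi y u * pot x y u : ℕ) : ℝ≥0∞) * (1/4)) ?_ ?_ ?_
    · exact ENNReal.mul_ne_top (ENNReal.natCast_ne_top _)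
        (lt_of_le_of_lt hq14 ENNReal.one_lt_top).ne
    · have hmu : ∀ u, (pot x y u : ℝ≥0∞) * muMeasure triplex (1/4) x u
          = ((chi x u * pot x y u : ℕ) : ℝ≥0∞) * (1/4) := by
        intro u; rw [mu_eq]; push_cast; ring
      calc ∑ u, (pot x y u : ℝ≥0∞) * muMeasure triplex (1/4) x u
          = ∑ u, ((chi x u * pot x y u : ℕ) : ℝ≥0∞) * (1/4) :=
            Finset.sum_congr rfl fun u _ => hmu u
        _ = ((∑ u, chi x u * pot x y u : ℕ) : ℝ≥0∞) * (1/4) := by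
            rw [← Finset.sum_mul, Nat.cast_sum]
        _ = ((∑ u, chi y u * pot x y u : ℕ) : ℝ≥0∞) * (1/4) + 1 := by
            rw [potSum x y hxy']
            push_cast
            rw [add_mul, h41]
    · have hmu : ∀ u, (pot x y u : ℝ≥0∞) * muMeasure triplex (1/4) y u
          = ((chi y u * pot x y u : ℕ) : ℝ≥0∞) * (1/4) := by
        intro u; rw [mu_eq]; push_cast; ring
      calc ∑ u, (pot x y u : ℝ≥0∞) * muMeasure triplex (1/4) y u
          = ∑ u, ((chi y u * pot x y u : ℕ) : ℝ≥0∞) * (1/4) :=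
            Finset.sum_congr rfl fun u _ => hmu u
        _ = ((∑ u, chi y u * pot x y u : ℕ) : ℝ≥0∞) * (1/4) := by
            rw [← Finset.sum_mul, Nat.cast_sum]

end RicciFlatCubic
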